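/- Consider the mixed-manna instance with two identical agents: goods 1..m with values given by positive integers e_1,...,e_m, and two chores each of value −(Σ_i e_i)/2 + 1/4, where Σ_i e_i is even and Σ_i e_i ≥ 2. If MMS > 0 for this instance, then the Partition instance {e_1,...,e_m} has a solution, i.e., there is a subset S ⊆ [m] with Σ_{j∈S} e_j = (Σ_j e_j)/2. -/

import Mathlib

open Finset
open scoped Classical

/-- `A` is a partition of the item set `M` into `n` (possibly empty) bundles. -/
def IsPartition {ι : Type*} [DecidableEq ι] (M : Finset ι) (n : ℕ)
    (A : Fin n → Finset ι) : Prop :=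
  (∀ k, A k ⊆ M) ∧ (∀ k l, k ≠ l → Disjoint (A k) (A l)) ∧ (∀ j ∈ M, ∃ k, j ∈ A k)

/-- `μ` is the maximin share of the additive valuation `v` over `M` with `n` bundles:
some partition attains minimum bundle value at least `μ`, and every partition has a
bundle of value at most `μ`. -/
def IsMMS {ι : Type*} [DecidableEq ι] (v : ι → ℝ) (M : Finset ι) (n : ℕ) (μ : ℝ) : Prop :=
  (∃ A : Fin n → Finset ι, IsPartition M n A ∧ ∀ k, μ ≤ ∑ j ∈ A k, v j) ∧
  (∀ A : Fin n → Finset ι, IsPartition M n A → ∃ k, ∑ j ∈ A k, v j ≤ μ)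


/-- For the two-agent mixed manna instance with goods `e_1,...,e_m` (positive integers
with even sum at least 2) and two chores of value `-(Σ e)/2 + 1/4` each: if the maximin
share is positive, then the Partition instance has a solution. -/
theorem mms_pos_implies_partition (m : ℕ) (e : Fin m → ℕ)
    (hpos : ∀ i, 0 < e i) (heven : 2 ∣ ∑ i, e i) (hT : 2 ≤ ∑ i, e i)
    (μ : ℝ)
    (hMMS : IsMMS
      (fun j : Fin (m + 2) =>
        if h : (j : ℕ) < m then (e ⟨j, h⟩ : ℝ)
        else -((∑ i, e i : ℕ) : ℝ) / 2 + 1 / 4)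
      Finset.univ 2 μ)
    (hμ : 0 < μ) :
    ∃ S : Finset (Fin m), 2 * ∑ i ∈ S, e i = ∑ i, e i := by
  classical
  obtain ⟨⟨A, ⟨-, hdisj, hcov⟩, hAk⟩, -⟩ := hMMS
  set T : ℕ := ∑ i, e i with hTdef
  set v : Fin (m + 2) → ℝ := fun j =>
    if h : (j : ℕ) < m then (e ⟨j, h⟩ : ℝ) else -(T : ℝ) / 2 + 1 / 4 with hv
  set S : Fin 2 → Finset (Fin m) :=
    fun k => univ.filter (fun i => Fin.castAdd 2 i ∈ A k) with hSdef
  set G : Fin 2 → ℕ := fun k => ∑ i ∈ S k, e i with hGdef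
  set C : Fin 2 → ℕ :=
    fun k => ((A k).filter (fun j : Fin (m+2) => ¬ (j : ℕ) < m)).card with hCdef
  have hdisj01 : Disjoint (A 0) (A 1) := hdisj 0 1 (by decide)
  -- goods part of each bundle is the image of S k
  have himg : ∀ k, (A k).filter (fun j : Fin (m+2) => (j : ℕ) < m)
      = (S k).image (fun i => Fin.castAdd 2 i) := by
    intro k
    ext j
    simp only [mem_filter, mem_image, hSdef, mem_univ, true_and]
    constructor
    · rintro ⟨hj, hjm⟩
      have hcj : Fin.castAdd 2 ⟨j, hjm⟩ = j := Fin.ext rfl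
      exact ⟨⟨j, hjm⟩, by rwa [hcj], hcj⟩
    · rintro ⟨i, hi, rfl⟩
      exact ⟨hi, i.isLt⟩
  have hsum : ∀ k, ∑ j ∈ A k, v j
      = (G k : ℝ) + (C k : ℝ) * (-(T : ℝ) / 2 + 1 / 4) := by
    intro k
    rw [← filter_union_filter_not_eq (p := fun j : Fin (m+2) => (j : ℕ) < m) (A k),
      sum_union (disjoint_filter_filter_not _ _ _)]
    congr 1
    · rw [himg k, sum_image (by intro a _ b _ h; exact Fin.castAdd_injective _ _ h)]
      rw [hGdef]
      push_cast
      refine Finset.sum_congr rfl ?_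
      intro i _
      simp [hv, i.isLt]
    · rw [Finset.sum_congr rfl (fun j hj => ?_), Finset.sum_const, nsmul_eq_mul, hCdef]
      have := (mem_filter.mp hj).2
      simp [hv, this]
  -- the chore set has exactly two elements
  have hchores : univ.filter (fun j : Fin (m + 2) => ¬ (j : ℕ) < m)
      = {(⟨m, by omega⟩ : Fin (m + 2)), ⟨m + 1, by omega⟩} := by
    ext j
    simp only [mem_filter, mem_univ, true_and, mem_insert, mem_singleton, Fin.ext_iff]
    have := j.isLt
    omega
  have hcard2 : (univ.filter (fun j : Fin (m + 2) => ¬ (j : ℕ) < m)).card = 2 := by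
    rw [hchores]
    rw [card_insert_of_notMem (by simp [Fin.ext_iff]), card_singleton]
  have huniv : A 0 ∪ A 1 = univ := by
    apply Finset.eq_univ_of_forall
    intro j
    obtain ⟨k, hk⟩ := hcov j (mem_univ j)
    rw [mem_union]
    fin_cases k
    · exact Or.inl hk
    · exact Or.inr hk
  have hC2 : C 0 + C 1 = 2 := by
    rw [hCdef]
    rw [← card_union_of_disjoint (hdisj01.mono (filter_subset _ _) (filter_subset _ _)),
      ← filter_union, huniv, hcard2]
  have hG2 : G 0 + G 1 = T := by
    rw [hGdef, hTdef]
    rw [← sum_union (s₁ := S 0) (s₂ := S 1) ?_]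
    · apply Finset.sum_congr ?_ (fun _ _ => rfl)
      apply Finset.eq_univ_of_forall
      intro i
      obtain ⟨k, hk⟩ := hcov (Fin.castAdd 2 i) (mem_univ _)
      rw [mem_union]
      simp only [hSdef, mem_filter, mem_univ, true_and]
      fin_cases k
      · exact Or.inl hk
      · exact Or.inr hk
    · rw [Finset.disjoint_left]
      intro i h0 h1
      simp only [hSdef, mem_filter, mem_univ, true_and] at h0 h1
      exact (Finset.disjoint_left.mp hdisj01) h0 h1
  have hval : ∀ k, 0 < (G k : ℝ) + (C k : ℝ) * (-(T : ℝ) / 2 + 1 / 4) := by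
    intro k
    calc 0 < μ := hμ
    _ ≤ ∑ j ∈ A k, v j := hAk k
    _ = _ := hsum k
  -- case analysis on C 0
  have hCle : C 0 ≤ 2 := by omega
  interval_cases h0 : C 0
  · -- C 0 = 0, C 1 = 2
    exfalso
    have hc1 : C 1 = 2 := by omega
    have h1 := hval 1
    rw [hc1] at h1
    have hG1T : (G 1 : ℝ) ≤ (T : ℝ) := by exact_mod_cast le_of_le_of_eq (Nat.le_add_left _ _) hG2
    have hG1 : G 1 = T := by
      have : (T : ℝ) < (G 1 : ℝ) + 1 / 2 := by nlinarith
      have : T < G 1 + 1 := by exact_mod_cast (by push_cast; linarith : (T : ℝ) < ((G 1 + 1 : ℕ) : ℝ))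
      omega
    have hG0 : G 0 = 0 := by omega
    have h0' := hval 0
    rw [h0, hG0] at h0'
    norm_num at h0'
  · -- C 0 = 1 = C 1 : the main case
    have hc1 : C 1 = 1 := by omega
    have h0' := hval 0
    have h1' := hval 1
    rw [h0] at h0'
    rw [hc1] at h1'
    have k0 : 2 * T ≤ 4 * G 0 := by
      have : ((2 * T : ℕ) : ℝ) < ((4 * G 0 + 1 : ℕ) : ℝ) := by push_cast; nlinarith
      have := Nat.cast_lt.mp this
      omega
    have k1 : 2 * T ≤ 4 * G 1 := by
      have : ((2 * T : ℕ) : ℝ) < ((4 * G 1 + 1 : ℕ) : ℝ) := by push_cast; nlinarith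
      have := Nat.cast_lt.mp this
      omega
    exact ⟨S 0, by have hg : ∑ i ∈ S 0, e i = G 0 := rfl; omega⟩
  · -- C 0 = 2, C 1 = 0
    exfalso
    have hc1 : C 1 = 0 := by omega
    have h1 := hval 0
    rw [h0] at h1
    have hG0T : (G 0 : ℝ) ≤ (T : ℝ) := by exact_mod_cast le_of_le_of_eq (Nat.le_add_right _ _) hG2
    have hG0 : G 0 = T := by
      have : (T : ℝ) < (G 0 : ℝ) + 1 / 2 := by nlinarith
      have : T < G 0 + 1 := by exact_mod_cast (by push_cast; linarith : (T : ℝ) < ((G 0 + 1 : ℕ) : ℝ))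
      omega
    have hG1 : G 1 = 0 := by omega
    have h1' := hval 1
    rw [hc1, hG1] at h1'
    norm_num at h1'
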